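/- Let fL, fU : ℝⁿ → ℝ be convex with fL ≤ fU pointwise, g_j : ℝⁿ → ℝ convex for j = 1,…,m, X = {x : g_j(x) ≤ 0 ∀j}, 0 ≤ εL ≤ εU, and let x* ∈ X be a weakly E-quasi-LU-solution (no x ∈ X with fL(x) < fL(x*) − εU‖x − x*‖ and fU(x) < fU(x*) − εL‖x − x*‖). Then there exist μL, μU ≥ 0 and λ_j ≥ 0 for j ∈ J(x*) = {j : g_j(x*) = 0}, with μL + μU + Σ_{j∈J(x*)} λ_j = 1, such that 0 ∈ μL·(∂fL(x*) + εU·B) + μU·(∂fU(x*) + εL·B) + Σ_{j∈J(x*)} λ_j·∂g_j(x*), where B is the closed unit ball of ℝⁿ. If moreover there do not exist λ_j ≥ 0, j ∈ J(x*), not all zero, with 0 ∈ Σ_{j∈J(x*)} λ_j ∂g_j(x*) (Mangasarian–Fromovitz condition), then μL + μU > 0. -/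

import Mathlib

open Pointwise

/-- The convex subdifferential of φ at x*. -/
def subdiff {n : ℕ} (φ : EuclideanSpace ℝ (Fin n) → ℝ)
    (xs : EuclideanSpace ℝ (Fin n)) : Set (EuclideanSpace ℝ (Fin n)) :=
  {v | ∀ x, φ x - φ xs ≥ (inner ℝ v (x - xs) : ℝ)}

variable {n : ℕ}

local notation "E" => EuclideanSpace ℝ (Fin n)

/-- core: if xs minimizes f+g, sum rule at a minimizer -/
lemma sumrule_min {f g : E → ℝ} (hf : ConvexOn ℝ Set.univ f)
    (hg : ConvexOn ℝ Set.univ g) (xs : E)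
    (hmin : ∀ x, f xs + g xs ≤ f x + g x) :
    ∃ v, v ∈ subdiff f xs ∧ -v ∈ subdiff g xs := by
  have hfc : Continuous f := by
    exact continuousOn_univ.mp (ConvexOn.continuousOn isOpen_univ hf)
  set A : Set (E × ℝ) := {p | f p.1 - f xs < p.2} with hA
  set B : Set (E × ℝ) := {p | p.2 ≤ g xs - g p.1} with hB
  have openA : IsOpen A := by
    have : Continuous fun p : E × ℝ => f p.1 - f xs := (hfc.comp continuous_fst).sub continuous_const
    exact isOpen_lt this continuous_snd
  have convA : Convex ℝ A := by
    intro p hp q hq a b ha hb hab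
    simp only [hA, Set.mem_setOf_eq] at hp hq ⊢
    have h1 : f (a • p.1 + b • q.1) ≤ a * f p.1 + b * f q.1 :=
      hf.2 (Set.mem_univ _) (Set.mem_univ _) ha hb hab
    have h2 : (a • p + b • q).2 = a * p.2 + b * q.2 := rfl
    have h3 : (a • p + b • q).1 = a • p.1 + b • q.1 := rfl
    rw [h2, h3]
    rcases eq_or_lt_of_le ha with rfl | ha'
    · simp only [zero_smul, one_smul, zero_add, zero_mul] at h1 ⊢
      have hb1 : b = 1 := by linarith
      subst hb1; simp only [one_smul, one_mul] at h1 ⊢; linarith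
    · have hx : a * f xs + b * f xs = f xs := by rw [← add_mul, hab, one_mul]
      have e1 : a * (f p.1 - f xs) < a * p.2 := mul_lt_mul_of_pos_left hp ha'
      have e2 : b * (f q.1 - f xs) ≤ b * q.2 := mul_le_mul_of_nonneg_left hq.le hb
      nlinarith [e1, e2, h1, hx]
  have convB : Convex ℝ B := by
    intro p hp q hq a b ha hb hab
    simp only [hB, Set.mem_setOf_eq] at hp hq ⊢
    have h1 : g (a • p.1 + b • q.1) ≤ a * g p.1 + b * g q.1 :=
      hg.2 (Set.mem_univ _) (Set.mem_univ _) ha hb hab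
    have h2 : (a • p + b • q).2 = a * p.2 + b * q.2 := rfl
    have h3 : (a • p + b • q).1 = a • p.1 + b • q.1 := rfl
    rw [h2, h3]
    have hx : a * g xs + b * g xs = g xs := by rw [← add_mul, hab, one_mul]
    have e1 : a * p.2 ≤ a * (g xs - g p.1) := mul_le_mul_of_nonneg_left hp ha
    have e2 : b * q.2 ≤ b * (g xs - g q.1) := mul_le_mul_of_nonneg_left hq hb
    nlinarith [e1, e2, h1, hx]
  have disj : Disjoint A B := by
    rw [Set.disjoint_left]
    intro p hpA hpB
    simp only [hA, hB, Set.mem_setOf_eq] at hpA hpB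
    have := hmin p.1
    linarith
  obtain ⟨L, u, hLA, hLB⟩ := geometric_hahn_banach_open convA openA convB disj
  set w0 : E := (InnerProductSpace.toDual ℝ E).symm
    (L.comp (ContinuousLinearMap.inl ℝ E ℝ)) with hw0
  set β : ℝ := L (0, 1) with hβ
  have hdec : ∀ (y : E) (t : ℝ), L (y, t) = (inner ℝ w0 y : ℝ) + t * β := by
    intro y t
    have h1 : (y, t) = (y, (0:ℝ)) + t • ((0:E), (1:ℝ)) := by
      simp [Prod.ext_iff]
    rw [h1, L.map_add, L.map_smul]
    have h2 : (inner ℝ w0 y : ℝ) = L (y, 0) := by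
      rw [hw0, InnerProductSpace.toDual_symm_apply]; rfl
    rw [h2, smul_eq_mul, hβ]
  have hxsB : ((xs, (0:ℝ)) : E × ℝ) ∈ B := by simp [hB]
  have huxs : u ≤ (inner ℝ w0 xs : ℝ) := by
    have := hLB _ hxsB; rwa [hdec, zero_mul, add_zero] at this
  have hβneg : β < 0 := by
    have h1 : ((xs, (1:ℝ)) : E × ℝ) ∈ A := by simp [hA]
    have := hLA _ h1
    rw [hdec, one_mul] at this
    linarith
  have hAf : ∀ y : E, (inner ℝ w0 y : ℝ) + β * (f y - f xs) ≤ u := by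
    intro y
    refine le_of_forall_pos_lt_add fun ε hε => ?_
    have hδ : (0:ℝ) < ε / (-β) := div_pos hε (neg_pos.2 hβneg)
    have hmem : ((y, f y - f xs + ε / (-β)) : E × ℝ) ∈ A := by
      simp only [hA, Set.mem_setOf_eq]; linarith
    have := hLA _ hmem
    rw [hdec] at this
    have hβε : (f y - f xs + ε / (-β)) * β = β * (f y - f xs) - ε := by
      have hb0 : (-β) ≠ 0 := neg_ne_zero.2 (ne_of_lt hβneg)
      have h5 : ε / (-β) * β = -ε := by
        rw [div_mul_eq_mul_div, div_neg, mul_div_assoc, div_self (ne_of_lt hβneg), mul_one]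
      rw [add_mul, h5]; ring
    rw [hβε] at this; linarith
  have hu : u = (inner ℝ w0 xs : ℝ) := by
    have h1 := hAf xs
    simp only [sub_self, mul_zero, add_zero] at h1
    linarith
  have hBg : ∀ y : E, u ≤ (inner ℝ w0 y : ℝ) + β * (g xs - g y) := by
    intro y
    have hmem : ((y, g xs - g y) : E × ℝ) ∈ B := by
      show g xs - g y ≤ g xs - g y
      exact le_rfl
    have := hLB _ hmem
    rwa [hdec, mul_comm] at this
  refine ⟨(-β)⁻¹ • w0, ?_, ?_⟩
  · intro x
    have h1 := hAf x
    rw [hu] at h1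
    have h2 : (inner ℝ w0 (x - xs) : ℝ) = inner ℝ w0 x - inner ℝ w0 xs := inner_sub_right _ _ _
    rw [ge_iff_le, real_inner_smul_left, h2]
    rw [inv_mul_le_iff₀ (neg_pos.2 hβneg)]
    nlinarith [h1]
  · intro x
    have h1 := hBg x
    rw [hu] at h1
    have h2 : (inner ℝ w0 (x - xs) : ℝ) = inner ℝ w0 x - inner ℝ w0 xs := inner_sub_right _ _ _
    rw [ge_iff_le, inner_neg_left, real_inner_smul_left, h2]
    rw [neg_le, le_inv_mul_iff₀ (neg_pos.2 hβneg)]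
    nlinarith [h1]

lemma affine_convexOn (v : E) (c : ℝ) :
    ConvexOn ℝ Set.univ (fun x : E => (inner ℝ v x : ℝ) + c) := by
  refine ⟨convex_univ, fun x _ y _ a b ha hb hab => ?_⟩
  simp only [inner_add_right, real_inner_smul_right, smul_eq_mul]
  have hc : a * c + b * c = c := by rw [← add_mul, hab, one_mul]
  linarith

lemma subdiff_add {f g : E → ℝ} (hf : ConvexOn ℝ Set.univ f)
    (hg : ConvexOn ℝ Set.univ g) (xs : E) {w : E}
    (hw : w ∈ subdiff (fun x => f x + g x) xs) :
    ∃ v₁ v₂, v₁ ∈ subdiff f xs ∧ v₂ ∈ subdiff g xs ∧ w = v₁ + v₂ := by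
  set F : E → ℝ := fun x => f x + ((inner ℝ (-w) x : ℝ) + (inner ℝ w xs : ℝ)) with hF
  have hFconv : ConvexOn ℝ Set.univ F := hf.add (affine_convexOn (-w) _)
  have hFval : ∀ x, F x = f x - (inner ℝ w (x - xs) : ℝ) := by
    intro x
    simp only [hF, inner_neg_left, inner_sub_right]
    ring
  have hmin : ∀ x, F xs + g xs ≤ F x + g x := by
    intro x
    have := hw x
    simp only [subdiff, Set.mem_setOf_eq] at this
    rw [hFval, hFval]
    simp only [sub_self, inner_zero_right, sub_zero]
    linarith [this]
  obtain ⟨v, hvF, hvg⟩ := sumrule_min hFconv hg xs hmin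
  refine ⟨v + w, -v, ?_, hvg, by abel⟩
  intro x
  have h1 := hvF x
  rw [hFval, hFval] at h1
  simp only [sub_self, inner_zero_right, sub_zero] at h1
  rw [ge_iff_le, inner_add_left]
  simp only [ge_iff_le] at h1
  linarith

lemma subdiff_nonempty {f : E → ℝ} (hf : ConvexOn ℝ Set.univ f) (xs : E) :
    (subdiff f xs).Nonempty := by
  set g : E → ℝ := fun x => f (xs + xs - x) with hgdef
  have hgconv : ConvexOn ℝ Set.univ g := by
    refine ⟨convex_univ, fun x _ y _ a b ha hb hab => ?_⟩
    have h1 : xs + xs - (a • x + b • y) = a • (xs + xs - x) + b • (xs + xs - y) := by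
      have hb' : b = 1 - a := by linarith
      subst hb'
      module
    simp only [hgdef]
    rw [h1]
    exact hf.2 (Set.mem_univ _) (Set.mem_univ _) ha hb hab
  have hmin : ∀ x, f xs + g xs ≤ f x + g x := by
    intro x
    have h1 : xs = (1/2 : ℝ) • x + (1/2 : ℝ) • (xs + xs - x) := by
      have : ((1:ℝ)/2 + 1/2) • xs = xs := by norm_num
      rw [smul_sub, smul_add, ← add_smul]
      rw [this]
      abel
    have h2 : f xs ≤ (1/2 : ℝ) * f x + (1/2 : ℝ) * f (xs + xs - x) := by
      nth_rewrite 1 [h1]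
      exact hf.2 (Set.mem_univ _) (Set.mem_univ _) (by norm_num) (by norm_num) (by norm_num)
    simp only [hgdef]
    rw [show xs + xs - xs = xs by abel]
    linarith
  obtain ⟨v, hv, -⟩ := sumrule_min hf hgconv xs hmin
  exact ⟨v, hv⟩

lemma inner_nonpos_all_zero {w xs : E} (h : ∀ x : E, (inner ℝ w (x - xs) : ℝ) ≤ 0) :
    w = 0 := by
  have h1 := h (xs + w)
  rw [add_sub_cancel_left, real_inner_self_eq_norm_sq] at h1
  have : ‖w‖ = 0 := by nlinarith [norm_nonneg w]
  exact norm_eq_zero.mp this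

lemma subdiff_smul' {f : E → ℝ} (hf : ConvexOn ℝ Set.univ f) (xs : E) {c : ℝ}
    (hc : 0 ≤ c) {v : E} (hv : v ∈ subdiff (fun x => c * f x) xs) :
    v ∈ c • subdiff f xs := by
  rcases eq_or_lt_of_le hc with rfl | hc'
  · have hv0 : v = 0 := by
      refine inner_nonpos_all_zero (xs := xs) fun x => ?_
      have := hv x
      simp only [zero_mul, sub_zero, ge_iff_le, sub_self] at this
      linarith [this]
    obtain ⟨s, hs⟩ := subdiff_nonempty hf xs
    exact ⟨s, hs, by simp [hv0]⟩
  · refine ⟨c⁻¹ • v, fun x => ?_, by exact smul_inv_smul₀ (ne_of_gt hc') v⟩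
    have h1 := hv x
    simp only [ge_iff_le] at h1 ⊢
    rw [real_inner_smul_left]
    rw [inv_mul_le_iff₀ hc']
    linarith [h1]

lemma convexOn_norm_sub (xs : E) : ConvexOn ℝ Set.univ (fun x : E => ‖x - xs‖) := by
  refine ⟨convex_univ, fun x _ y _ a b ha hb hab => ?_⟩
  have h1 : a • x + b • y - xs = a • (x - xs) + b • (y - xs) := by
    have hb' : b = 1 - a := by linarith
    subst hb'
    module
  show ‖a • x + b • y - xs‖ ≤ a • ‖x - xs‖ + b • ‖y - xs‖
  simp only [smul_eq_mul]
  rw [h1]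
  calc ‖a • (x - xs) + b • (y - xs)‖ ≤ ‖a • (x - xs)‖ + ‖b • (y - xs)‖ := norm_add_le _ _
    _ = a * ‖x - xs‖ + b * ‖y - xs‖ := by
        rw [norm_smul, norm_smul, Real.norm_eq_abs, Real.norm_eq_abs, abs_of_nonneg ha,
          abs_of_nonneg hb]
  
lemma subdiff_norm_subset (xs : E) :
    subdiff (fun x : E => ‖x - xs‖) xs ⊆ Metric.closedBall (0 : E) 1 := by
  intro v hv
  rw [Metric.mem_closedBall, dist_zero_right]
  have h1 := hv (xs + v)
  simp only [add_sub_cancel_left, sub_self, norm_zero, sub_zero,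
    real_inner_self_eq_norm_sq, ge_iff_le] at h1
  nlinarith [norm_nonneg v]

lemma subdiff_scaled_norm {c : ℝ} (hc : 0 ≤ c) (xs : E) {v : E}
    (hv : v ∈ subdiff (fun x => c * ‖x - xs‖) xs) :
    v ∈ c • Metric.closedBall (0 : E) 1 := by
  have h1 : v ∈ c • subdiff (fun x : E => ‖x - xs‖) xs :=
    subdiff_smul' (convexOn_norm_sub xs) xs hc hv
  exact Set.smul_set_mono (subdiff_norm_subset xs) h1

lemma mem_finset_sum_sets {ι : Type*} (s : Finset ι) (f : ι → E) (S : ι → Set E)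
    (h : ∀ i ∈ s, f i ∈ S i) : ∑ i ∈ s, f i ∈ ∑ i ∈ s, S i := by
  classical
  induction s using Finset.induction_on with
  | empty => simp
  | insert _ _ hns ih =>
    rw [Finset.sum_insert hns, Finset.sum_insert hns]
    exact Set.add_mem_add (h _ (Finset.mem_insert_self _ _))
      (ih fun i hi => h i (Finset.mem_insert_of_mem hi))

lemma convexOn_finset_sum {ι : Type*} (s : Finset ι) (h : ι → E → ℝ)
    (hconv : ∀ i ∈ s, ConvexOn ℝ Set.univ (h i)) :
    ConvexOn ℝ Set.univ (fun x => ∑ i ∈ s, h i x) := by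
  classical
  induction s using Finset.induction_on with
  | empty => simpa using convexOn_const (0:ℝ) convex_univ
  | insert _ _ hns ih =>
    simp only [Finset.sum_insert hns]
    exact (hconv _ (Finset.mem_insert_self _ _)).add
      (ih fun i hi => hconv i (Finset.mem_insert_of_mem hi))

lemma subdiff_finset_sum {ι : Type*} [DecidableEq ι] (s : Finset ι) (h : ι → E → ℝ)
    (hconv : ∀ i, ConvexOn ℝ Set.univ (h i)) (xs : E) {w : E}
    (hw : w ∈ subdiff (fun x => ∑ i ∈ s, h i x) xs) :
    ∃ v : ι → E, (∀ i ∈ s, v i ∈ subdiff (h i) xs) ∧ ∑ i ∈ s, v i = w := by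
  classical
  induction s using Finset.induction_on generalizing w with
  | empty =>
    refine ⟨fun _ => 0, by simp, ?_⟩
    simp only [Finset.sum_empty]
    symm
    refine inner_nonpos_all_zero (xs := xs) fun x => ?_
    have := hw x
    simp only [Finset.sum_empty, sub_self, ge_iff_le] at this
    linarith [this]
  | insert a s' hns ih =>
    have hw' : w ∈ subdiff (fun x => h a x + ∑ i ∈ s', h i x) xs := by
      intro x
      have := hw x
      simpa [Finset.sum_insert hns] using this
    obtain ⟨v₁, v₂, hv₁, hv₂, hw12⟩ := subdiff_add (hconv a)
      (convexOn_finset_sum s' h fun i _ => hconv i) xs hw'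
    obtain ⟨v, hv, hvsum⟩ := ih hv₂
    refine ⟨Function.update v a v₁, fun i hi => ?_, ?_⟩
    · rcases Finset.mem_insert.mp hi with rfl | hi'
      · rw [Function.update_self]; exact hv₁
      · rw [Function.update_of_ne (by rintro rfl; exact hns hi')]
        exact hv i hi'
    · rw [Finset.sum_insert hns, Function.update_self]
      have hcong : ∑ x ∈ s', Function.update v a v₁ x = ∑ x ∈ s', v x :=
        Finset.sum_congr rfl fun i hi =>
          Function.update_of_ne (fun h' : i = a => hns (h' ▸ hi)) _ _
      rw [hcong, hvsum, hw12]

lemma convexOn_congr {n : ℕ} {f h : EuclideanSpace ℝ (Fin n) → ℝ}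
    (hfh : ∀ x, f x = h x) (hf : ConvexOn ℝ Set.univ f) :
    ConvexOn ℝ Set.univ h := by
  have : f = h := funext hfh
  exact this ▸ hf

set_option maxHeartbeats 1000000 in
theorem KKT_necessary_weakly_E_quasi_LU (n m : ℕ)
    (fL fU : EuclideanSpace ℝ (Fin n) → ℝ)
    (hfL : ConvexOn ℝ Set.univ fL) (hfU : ConvexOn ℝ Set.univ fU)
    (hf : ∀ x, fL x ≤ fU x)
    (g : Fin m → EuclideanSpace ℝ (Fin n) → ℝ)
    (hg : ∀ j, ConvexOn ℝ Set.univ (g j))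
    (εL εU : ℝ) (hεL : 0 ≤ εL) (hε : εL ≤ εU)
    (xs : EuclideanSpace ℝ (Fin n)) (hxs : ∀ j, g j xs ≤ 0)
    (hsol : ¬ ∃ x, (∀ j, g j x ≤ 0) ∧
      fL x < fL xs - εU * ‖x - xs‖ ∧ fU x < fU xs - εL * ‖x - xs‖) :
    ∃ μL μU : ℝ, ∃ lam : Fin m → ℝ,
      0 ≤ μL ∧ 0 ≤ μU ∧ (∀ j, 0 ≤ lam j) ∧ (∀ j, g j xs ≠ 0 → lam j = 0) ∧
      μL + μU + ∑ j, lam j = 1 ∧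
      (0 : EuclideanSpace ℝ (Fin n)) ∈
        μL • (subdiff fL xs + εU • Metric.closedBall (0 : EuclideanSpace ℝ (Fin n)) 1) +
        μU • (subdiff fU xs + εL • Metric.closedBall (0 : EuclideanSpace ℝ (Fin n)) 1) +
        ∑ j, lam j • subdiff (g j) xs ∧
      ((¬ ∃ lam' : Fin m → ℝ, (∀ j, 0 ≤ lam' j) ∧ (∀ j, g j xs ≠ 0 → lam' j = 0) ∧
          (∃ j, lam' j ≠ 0) ∧
          (0 : EuclideanSpace ℝ (Fin n)) ∈ ∑ j, lam' j • subdiff (g j) xs) →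
        0 < μL + μU) := by
  classical
  have hεU : 0 ≤ εU := le_trans hεL hε
  set a : EuclideanSpace ℝ (Fin n) → (Fin 2 ⊕ Fin m) → ℝ := fun x =>
    Sum.elim (fun k : Fin 2 => if k = 0 then fL x - fL xs + εU * ‖x - xs‖
      else fU x - fU xs + εL * ‖x - xs‖) (fun j => g j x) with ha
  -- convexity of components
  have hconvA : ∀ i, ConvexOn ℝ Set.univ (fun x => a x i) := by
    intro i
    rcases i with k | j
    · by_cases hk : k = 0
      · refine convexOn_congr (f := (fL + fun x => εU • ‖x - xs‖) + fun _ => -fL xs)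
          (fun x => by simp [ha, hk, Pi.add_apply, smul_eq_mul]; ring) ?_
        exact (hfL.add ((convexOn_norm_sub xs).smul hεU)).add
          (convexOn_const (-fL xs) convex_univ)
      · refine convexOn_congr (f := (fU + fun x => εL • ‖x - xs‖) + fun _ => -fU xs)
          (fun x => by simp [ha, hk, Pi.add_apply, smul_eq_mul]; ring) ?_
        exact (hfU.add ((convexOn_norm_sub xs).smul hεL)).add
          (convexOn_const (-fU xs) convex_univ)
    · simpa [ha] using hg j
  -- a xs = (0,0,g j xs)
  have haxs0 : a xs (Sum.inl 0) = 0 := by simp [ha]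
  have haxs1 : a xs (Sum.inl 1) = 0 := by simp [ha]
  have haxsj : ∀ j, a xs (Sum.inr j) = g j xs := fun j => rfl
  -- the open convex set C and separation
  set C : Set ((Fin 2 ⊕ Fin m) → ℝ) := {r | ∃ x, ∀ i, a x i < r i} with hC
  have hopenC : IsOpen C := by
    have : C = ⋃ x, ⋂ i, {r : (Fin 2 ⊕ Fin m) → ℝ | a x i < r i} := by
      ext r; simp [hC, Set.mem_iUnion, Set.mem_iInter]
    rw [this]
    exact isOpen_iUnion fun x => isOpen_iInter_of_finite fun i =>
      isOpen_lt continuous_const (continuous_apply i)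
  have hconvC : Convex ℝ C := by
    rintro r ⟨x, hx⟩ r' ⟨x', hx'⟩ t s ht hs hts
    refine ⟨t • x + s • x', fun i => ?_⟩
    have h1 : a (t • x + s • x') i ≤ t * a x i + s * a x' i :=
      (hconvA i).2 (Set.mem_univ _) (Set.mem_univ _) ht hs hts
    have h2 : (t • r + s • r') i = t * r i + s * r' i := rfl
    rw [h2]
    rcases eq_or_lt_of_le ht with rfl | ht'
    · simp only [zero_mul, zero_add] at h1 ⊢
      have hs1 : s = 1 := by linarith
      subst hs1
      simp only [one_mul] at h1 ⊢
      linarith [hx' i]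
    · have e1 : t * a x i < t * r i := mul_lt_mul_of_pos_left (hx i) ht'
      have e2 : s * a x' i ≤ s * r' i := mul_le_mul_of_nonneg_left (hx' i).le hs
      linarith
  have h0C : (0 : (Fin 2 ⊕ Fin m) → ℝ) ∉ C := by
    rintro ⟨x, hx⟩
    refine hsol ⟨x, fun j => ?_, ?_, ?_⟩
    · have := hx (Sum.inr j); simp [ha] at this; linarith
    · have := hx (Sum.inl 0); simp [ha] at this; linarith
    · have := hx (Sum.inl 1); simp [ha] at this; linarith
  obtain ⟨L, hL⟩ := geometric_hahn_banach_open_point hconvC hopenC h0C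
  rw [map_zero] at hL
  -- multipliers
  set μ : (Fin 2 ⊕ Fin m) → ℝ := fun i => -(L (Pi.single i 1)) with hμ
  have hLsum : ∀ r : (Fin 2 ⊕ Fin m) → ℝ, L r = -∑ i, r i * μ i := by
    intro r
    have h1 : r = ∑ i, r i • (Pi.single i 1 : (Fin 2 ⊕ Fin m) → ℝ) := by
      funext j
      rw [Finset.sum_apply]
      simp [Pi.single_apply]
    calc L r = L (∑ i, r i • (Pi.single i 1 : (Fin 2 ⊕ Fin m) → ℝ)) := by rw [← h1]
      _ = ∑ i, r i * L (Pi.single i 1) := by rw [map_sum]; simp [map_smul, smul_eq_mul]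
      _ = -∑ i, r i * μ i := by simp [hμ, mul_neg]
  -- base point in C
  have hbase : (fun i => a xs i + 1) ∈ C :=
    ⟨xs, fun i => by show a xs i < a xs i + 1; linarith⟩
  have hLbase : L (fun i => a xs i + 1) < 0 := hL _ hbase
  -- nonnegativity of μ
  have hμpos : ∀ i, 0 ≤ μ i := by
    intro i
    by_contra hneg
    push_neg at hneg
    -- μ i < 0 means L (single i 1) > 0
    have hLe : 0 < L (Pi.single i 1) := by simp [hμ] at hneg; linarith
    set T : ℝ := (1 - L (fun k => a xs k + 1)) / L (Pi.single i 1) with hT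
    have hT0 : 0 < T := div_pos (by linarith) hLe
    have hmem : (fun k => a xs k + 1) + T • (Pi.single i 1 : (Fin 2 ⊕ Fin m) → ℝ) ∈ C := by
      refine ⟨xs, fun k => ?_⟩
      have : (0:ℝ) ≤ T • (Pi.single i 1 : (Fin 2 ⊕ Fin m) → ℝ) k := by
        simp only [Pi.smul_apply, smul_eq_mul, Pi.single_apply]
        positivity
      have h2 : ((fun k => a xs k + 1) + T • (Pi.single i 1 : (Fin 2 ⊕ Fin m) → ℝ)) k
          = a xs k + 1 + T • (Pi.single i 1 : (Fin 2 ⊕ Fin m) → ℝ) k := rfl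
      rw [h2]; linarith
    have := hL _ hmem
    rw [map_add, map_smul, smul_eq_mul, hT, div_mul_cancel₀ _ (ne_of_gt hLe)] at this
    linarith
  -- key inequality
  set S : ℝ := ∑ i, μ i with hSdef
  have hSnn : 0 ≤ S := Finset.sum_nonneg fun i _ => hμpos i
  have hkey : ∀ x, 0 ≤ ∑ i, μ i * a x i := by
    intro x
    by_contra hneg
    push_neg at hneg
    set X : ℝ := ∑ i, μ i * a x i with hX
    set δ : ℝ := -X / (S + 1) with hδdef
    have hδ : 0 < δ := div_pos (by linarith) (by linarith)
    have hmem : (fun i => a x i + δ) ∈ C :=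
      ⟨x, fun i => by show a x i < a x i + δ; linarith⟩
    have h2 := hL _ hmem
    rw [hLsum] at h2
    have h3 : ∑ i, (fun i => a x i + δ) i * μ i = X + δ * S := by
      have : ∀ i ∈ Finset.univ, (a x i + δ) * μ i = μ i * a x i + δ * μ i := by
        intro i _; ring
      rw [Finset.sum_congr rfl this, Finset.sum_add_distrib, ← Finset.mul_sum, ← hX, ← hSdef]
    rw [h3] at h2
    have h4 : δ * (S + 1) = -X := div_mul_cancel₀ _ (by linarith)
    nlinarith
  have hSpos : 0 < S := by
    rcases eq_or_lt_of_le hSnn with h | h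
    · exfalso
      have hall : ∀ i ∈ Finset.univ, μ i = 0 :=
        (Finset.sum_eq_zero_iff_of_nonneg (fun i _ => hμpos i)).mp h.symm
      have : L (fun i => a xs i + 1) = 0 := by
        rw [hLsum]
        rw [Finset.sum_eq_zero fun i hi => by rw [hall i hi, mul_zero]]
        norm_num
      linarith
    · exact h
  -- normalized multipliers
  set ν : (Fin 2 ⊕ Fin m) → ℝ := fun i => μ i / S with hν
  have hνnn : ∀ i, 0 ≤ ν i := fun i => div_nonneg (hμpos i) hSnn
  have hνsum : ∑ i, ν i = 1 := by
    rw [hν, ← Finset.sum_div, ← hSdef]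
    exact div_self (ne_of_gt hSpos)
  have hkeyν : ∀ x, 0 ≤ ∑ i, ν i * a x i := by
    intro x
    have heq : ∑ i, ν i * a x i = (∑ i, μ i * a x i) / S := by
      rw [Finset.sum_div]
      exact Finset.sum_congr rfl fun i _ => by rw [hν, div_mul_eq_mul_div]
    rw [heq]
    exact div_nonneg (hkey x) hSnn
  have hsum_split : ∀ F : (Fin 2 ⊕ Fin m) → ℝ,
      ∑ i, F i = F (Sum.inl 0) + F (Sum.inl 1) + ∑ j, F (Sum.inr j) := by
    intro F
    rw [Fintype.sum_sum_type, Fin.sum_univ_two]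
  set μL : ℝ := ν (Sum.inl 0) with hμLdef
  set μU : ℝ := ν (Sum.inl 1) with hμUdef
  set lam : Fin m → ℝ := fun j => ν (Sum.inr j) with hlamdef
  have hμL0 : 0 ≤ μL := hνnn _
  have hμU0 : 0 ≤ μU := hνnn _
  have hlam0 : ∀ j, 0 ≤ lam j := fun j => hνnn _
  -- complementary slackness
  have hslack : ∀ j, lam j * g j xs = 0 := by
    have h0 := hkeyν xs
    rw [hsum_split (fun i => ν i * a xs i), haxs0, haxs1, mul_zero, mul_zero,
      zero_add, zero_add] at h0
    have hterm : ∀ j ∈ Finset.univ, ν (Sum.inr j) * a xs (Sum.inr j) ≤ 0 := by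
      intro j _
      rw [haxsj]
      simpa using mul_le_mul_of_nonneg_left (hxs j) (hνnn (Sum.inr j))
    have hsz : ∑ j, ν (Sum.inr j) * a xs (Sum.inr j) = 0 :=
      le_antisymm (Finset.sum_nonpos hterm) h0
    intro j
    have := (Finset.sum_eq_zero_iff_of_nonpos hterm).mp hsz j (Finset.mem_univ j)
    rwa [haxsj] at this
  have hslack' : ∀ j, g j xs ≠ 0 → lam j = 0 := by
    intro j hgj
    rcases mul_eq_zero.mp (hslack j) with h | h
    · exact h
    · exact absurd h hgj
  -- identity for the key inequality
  have hID : ∀ x, ∑ i, ν i * a x i =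
      μL * (fL x - fL xs + εU * ‖x - xs‖) + μU * (fU x - fU xs + εL * ‖x - xs‖)
        + ∑ j, lam j * g j x := by
    intro x
    rw [hsum_split (fun i => ν i * a x i)]
    have e0 : a x (Sum.inl 0) = fL x - fL xs + εU * ‖x - xs‖ := by simp [ha]
    have e1 : a x (Sum.inl 1) = fU x - fU xs + εL * ‖x - xs‖ := by simp [ha]
    rw [e0, e1]
    rfl
  -- the convex combination function Ψ and its minimality at xs
  set G : EuclideanSpace ℝ (Fin n) → ℝ := fun x => ∑ j, lam j * g j x with hGdef
  have hGconv : ConvexOn ℝ Set.univ G := by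
    apply convexOn_finset_sum
    intro j _
    exact (hg j).smul (hlam0 j)
  have hPconv : ConvexOn ℝ Set.univ
      (fun x => μL * fL x + (μL * εU) * ‖x - xs‖) := by
    have h1 := (hfL.smul hμL0).add ((convexOn_norm_sub xs).smul
      (mul_nonneg hμL0 hεU))
    simpa [smul_eq_mul, Pi.add_def] using h1
  have hQconv : ConvexOn ℝ Set.univ
      (fun x => μU * fU x + (μU * εL) * ‖x - xs‖) := by
    have h1 := (hfU.smul hμU0).add ((convexOn_norm_sub xs).smul
      (mul_nonneg hμU0 hεL))
    simpa [smul_eq_mul, Pi.add_def] using h1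
  set Ψ : EuclideanSpace ℝ (Fin n) → ℝ := fun x =>
    (μL * fL x + (μL * εU) * ‖x - xs‖) +
      ((μU * fU x + (μU * εL) * ‖x - xs‖) + G x) with hΨdef
  have hGxs : G xs = 0 := by
    rw [hGdef]
    exact Finset.sum_eq_zero fun j _ => hslack j
  have hmin : ∀ x, Ψ xs ≤ Ψ x := by
    intro x
    have hk := hkeyν x
    rw [hID x] at hk
    simp only [hΨdef]
    rw [hGxs, sub_self, norm_zero]
    have : (0:ℝ) ≤ μL * (fL x - fL xs + εU * ‖x - xs‖)
        + μU * (fU x - fU xs + εL * ‖x - xs‖) + G x := hk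
    nlinarith [this]
  have h0mem : (0 : EuclideanSpace ℝ (Fin n)) ∈ subdiff Ψ xs := by
    intro x
    rw [inner_zero_left]
    have := hmin x
    linarith
  -- decompose
  obtain ⟨vP, vR, hvP, hvR, h0eq⟩ := subdiff_add hPconv (hQconv.add hGconv) xs h0mem
  obtain ⟨v1, v2, hv1, hv2, hvPeq⟩ := subdiff_add (hfL.smul hμL0)
    ((convexOn_norm_sub xs).smul (mul_nonneg hμL0 hεU)) xs hvP
  obtain ⟨vQ, vG, hvQ, hvG, hvReq⟩ := subdiff_add hQconv hGconv xs hvR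
  obtain ⟨v3, v4, hv3, hv4, hvQeq⟩ := subdiff_add (hfU.smul hμU0)
    ((convexOn_norm_sub xs).smul (mul_nonneg hμU0 hεL)) xs hvQ
  obtain ⟨u, hu, husum⟩ := subdiff_finset_sum Finset.univ (fun j x => lam j * g j x)
    (fun j => (hg j).smul (hlam0 j)) xs hvG
  -- memberships
  have m1 : v1 ∈ μL • subdiff fL xs := subdiff_smul' hfL xs hμL0 hv1
  have m2 : v2 ∈ μL • (εU • Metric.closedBall (0 : EuclideanSpace ℝ (Fin n)) 1) := by
    have := subdiff_scaled_norm (mul_nonneg hμL0 hεU) xs hv2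
    rwa [mul_smul] at this
  have m3 : v3 ∈ μU • subdiff fU xs := subdiff_smul' hfU xs hμU0 hv3
  have m4 : v4 ∈ μU • (εL • Metric.closedBall (0 : EuclideanSpace ℝ (Fin n)) 1) := by
    have := subdiff_scaled_norm (mul_nonneg hμU0 hεL) xs hv4
    rwa [mul_smul] at this
  have mj : ∀ j, u j ∈ lam j • subdiff (g j) xs := fun j =>
    subdiff_smul' (hg j) xs (hlam0 j) (hu j (Finset.mem_univ j))
  have mG : ∑ j, u j ∈ ∑ j, lam j • subdiff (g j) xs :=
    mem_finset_sum_sets _ _ _ fun j _ => mj j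
  -- assemble membership
  have mP : v1 + v2 ∈ μL • (subdiff fL xs +
      εU • Metric.closedBall (0 : EuclideanSpace ℝ (Fin n)) 1) := by
    obtain ⟨s1, hs1, rfl⟩ := m1
    obtain ⟨b2, hb2, rfl⟩ := m2
    rw [← smul_add]
    exact Set.smul_mem_smul_set (Set.add_mem_add hs1 hb2)
  have mQ : v3 + v4 ∈ μU • (subdiff fU xs +
      εL • Metric.closedBall (0 : EuclideanSpace ℝ (Fin n)) 1) := by
    obtain ⟨s3, hs3, rfl⟩ := m3
    obtain ⟨b4, hb4, rfl⟩ := m4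
    rw [← smul_add]
    exact Set.smul_mem_smul_set (Set.add_mem_add hs3 hb4)
  have hzero_eq : (0 : EuclideanSpace ℝ (Fin n)) =
      ((v1 + v2) + (v3 + v4)) + ∑ j, u j := by
    rw [h0eq, hvPeq, hvReq, hvQeq, husum]
    abel
  have hmem_final : (0 : EuclideanSpace ℝ (Fin n)) ∈
      μL • (subdiff fL xs + εU • Metric.closedBall (0 : EuclideanSpace ℝ (Fin n)) 1) +
      μU • (subdiff fU xs + εL • Metric.closedBall (0 : EuclideanSpace ℝ (Fin n)) 1) +
      ∑ j, lam j • subdiff (g j) xs := by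
    have hmm := Set.add_mem_add (Set.add_mem_add mP mQ) mG
    rwa [← hzero_eq] at hmm
  have hsum1 : μL + μU + ∑ j, lam j = 1 := by
    rw [← hνsum, hsum_split ν]
  refine ⟨μL, μU, lam, hμL0, hμU0, hlam0, hslack', hsum1, hmem_final, ?_⟩
  -- the Mangasarian-Fromovitz part
  intro hMF
  by_contra hle
  push_neg at hle
  have hμL : μL = 0 := le_antisymm (by linarith) hμL0
  have hμU : μU = 0 := le_antisymm (by linarith) hμU0
  apply hMF
  refine ⟨lam, hlam0, hslack', ?_, ?_⟩
  · by_contra hall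
    push_neg at hall
    have : ∑ j, lam j = 0 := Finset.sum_eq_zero fun j _ => hall j
    rw [this] at hsum1
    rw [hμL, hμU] at hsum1
    norm_num at hsum1
  · -- show 0 ∈ ∑ j, lam j • subdiff (g j) xs
    have hz1 : v1 = 0 := by
      refine inner_nonpos_all_zero (xs := xs) fun x => ?_
      have := hv1 x
      rw [hμL] at this
      simp only [smul_eq_mul, zero_mul, sub_zero, sub_self, ge_iff_le] at this
      linarith [this]
    have hz2 : v2 = 0 := by
      refine inner_nonpos_all_zero (xs := xs) fun x => ?_
      have := hv2 x
      rw [hμL] at this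
      simp only [smul_eq_mul, zero_mul, sub_zero, sub_self, ge_iff_le] at this
      linarith [this]
    have hz3 : v3 = 0 := by
      refine inner_nonpos_all_zero (xs := xs) fun x => ?_
      have := hv3 x
      rw [hμU] at this
      simp only [smul_eq_mul, zero_mul, sub_zero, sub_self, ge_iff_le] at this
      linarith [this]
    have hz4 : v4 = 0 := by
      refine inner_nonpos_all_zero (xs := xs) fun x => ?_
      have := hv4 x
      rw [hμU] at this
      simp only [smul_eq_mul, zero_mul, sub_zero, sub_self, ge_iff_le] at this
      linarith [this]
    have husum0 : ∑ j, u j = 0 := by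
      have := hzero_eq
      rw [hz1, hz2, hz3, hz4] at this
      simpa using this.symm
    rw [← husum0]
    exact mG
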